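/- Let ζ = e^{2πi/6}, let G₁ = G(2,1,2) be the subgroup of GL(2,ℂ) generated by [[0,1],[1,0]], [[0,−1],[−1,0]] and [[−1,0],[0,1]], and let G₄ = G(6,1,2) be the subgroup of GL(2,ℂ) generated by u = [[0,1],[1,0]], s = [[0,ζ],[ζ⁻¹,0]] and t = [[ζ,0],[0,1]]. Then G₁ is a subgroup of G₄, and the elements of order 2 of G₄ are exactly the elements of order 2 of G₁ together with s, usu = [[0,ζ⁻¹],[ζ,0]], sus = [[0,ζ²],[ζ⁻²,0]] and ususu = [[0,ζ⁻²],[ζ²,0]]. -/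
import Mathlib


open Matrix

noncomputable section

/-- `ζ = e^{2πi/6}`. -/
def zeta : ℂ := Complex.exp (2 * (Real.pi : ℂ) * Complex.I / 6)

lemma zeta_eq : zeta = Complex.exp ((Real.pi/3 : ℝ) * Complex.I) := by
  unfold zeta; push_cast; ring_nf

lemma zeta_ne_zero : zeta ≠ 0 := Complex.exp_ne_zero _

lemma zeta_cube : zeta ^ 3 = -1 := by
  unfold zeta
  rw [← Complex.exp_nat_mul]
  rw [show (3:ℕ) * (2 * (Real.pi:ℂ) * Complex.I / 6) = Real.pi * Complex.I by push_cast; ring]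
  exact Complex.exp_pi_mul_I

lemma zeta_pow_six : zeta ^ 6 = 1 := by
  have h : zeta ^ 6 = (zeta ^ 3) ^ 2 := by ring
  rw [h, zeta_cube]; ring

lemma zeta_ne_neg_one : zeta ≠ -1 := by
  have h : zeta.re = Real.cos (Real.pi/3) := by
    rw [zeta_eq, Complex.exp_ofReal_mul_I_re]
  intro hEq
  rw [hEq, Real.cos_pi_div_three] at h
  norm_num at h

lemma zeta_sq : zeta ^ 2 = zeta - 1 := by
  have h := zeta_cube
  have h0 : (zeta + 1) * (zeta ^ 2 - zeta + 1) = 0 := by linear_combination h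
  rcases mul_eq_zero.mp h0 with h1 | h2
  · exact absurd (by linear_combination h1 : zeta = -1) zeta_ne_neg_one
  · linear_combination h2

lemma zeta_inv : zeta⁻¹ = zeta ^ 5 :=
  inv_eq_of_mul_eq_one_right (by linear_combination zeta_pow_six)

lemma zeta_mul_inv : zeta * zeta⁻¹ = 1 := mul_inv_cancel₀ zeta_ne_zero

lemma zeta_inv_mul : zeta⁻¹ * zeta = 1 := inv_mul_cancel₀ zeta_ne_zero

lemma zeta_zpow_neg_two : zeta ^ (-2 : ℤ) = zeta ^ 4 := by
  rw [show (-2 : ℤ) = -((2:ℕ):ℤ) by norm_num, _root_.zpow_neg, zpow_natCast]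
  exact inv_eq_of_mul_eq_one_right (by linear_combination zeta_pow_six)

lemma zeta_pow4 : zeta ^ 4 = -zeta := by linear_combination zeta * zeta_cube

lemma zeta_pow5 : zeta ^ 5 = 1 - zeta := by
  linear_combination zeta^2 * zeta_cube - zeta_sq

lemma root6 {a : ℂ} (ha : a ^ 6 = 1) :
    a = 1 ∨ a = -1 ∨ a = zeta ∨ a = zeta ^ 2 ∨ a = zeta ^ 4 ∨ a = zeta ^ 5 := by
  have h3 : a ^ 3 = 1 ∨ a ^ 3 = -1 := mul_self_eq_one_iff.mp (by linear_combination ha)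
  have e2 := zeta_sq
  have e4 := zeta_pow4
  rcases h3 with h | h
  · have key : (a - 1) * ((a - zeta ^ 2) * (a - zeta ^ 4)) = 0 := by
      linear_combination h + (a - a^2) * e2 + (a - a^2) * e4 + (a - 1) * zeta_pow_six
    rcases mul_eq_zero.mp key with h1 | h1
    · exact Or.inl (by linear_combination h1)
    rcases mul_eq_zero.mp h1 with h2 | h2
    · exact Or.inr (Or.inr (Or.inr (Or.inl (by linear_combination h2))))
    · exact Or.inr (Or.inr (Or.inr (Or.inr (Or.inl (by linear_combination h2)))))
  · have key : (a + 1) * ((a - zeta) * (a - zeta ^ 5)) = 0 := by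
      linear_combination h - a*(a+1)*zeta_pow5 + (a+1)*zeta_pow_six
    rcases mul_eq_zero.mp key with h1 | h1
    · exact Or.inr (Or.inl (by linear_combination h1))
    rcases mul_eq_zero.mp h1 with h2 | h2
    · exact Or.inr (Or.inr (Or.inl (by linear_combination h2)))
    · exact Or.inr (Or.inr (Or.inr (Or.inr (Or.inr (by linear_combination h2)))))

lemma mat2_ext {a b c d e f g h : ℂ} (h1 : a = e) (h2 : b = f) (h3 : c = g) (h4 : d = h) :
    !![a,b;c,d] = !![e,f;g,h] := by rw [h1, h2, h3, h4]

lemma mat2_entries {a b c d e f g h : ℂ} (hh : !![a,b;c,d] = !![e,f;g,h]) :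
    a = e ∧ b = f ∧ c = g ∧ d = h := by
  have h0 := congrFun (congrFun hh 0) 0
  have h1 := congrFun (congrFun hh 0) 1
  have h2 := congrFun (congrFun hh 1) 0
  have h3 := congrFun (congrFun hh 1) 1
  simp at h0 h1 h2 h3
  exact ⟨h0, h1, h2, h3⟩

/-- The group of monomial matrices whose entries are 6-th roots of unity. -/
def Hgrp : Subgroup (GL (Fin 2) ℂ) where
  carrier := {x | ∃ a b : ℂ, a ^ 6 = 1 ∧ b ^ 6 = 1 ∧
    ((x : Matrix (Fin 2) (Fin 2) ℂ) = !![a,0;0,b] ∨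
     (x : Matrix (Fin 2) (Fin 2) ℂ) = !![0,a;b,0])}
  one_mem' := ⟨1, 1, one_pow 6, one_pow 6, Or.inl (by
    rw [Units.val_one, Matrix.one_fin_two])⟩
  mul_mem' := by
    rintro x y ⟨a, b, ha, hb, hx | hx⟩ ⟨c, d, hc, hd, hy | hy⟩
    · exact ⟨a*c, b*d, by rw [mul_pow, ha, hc, one_mul], by rw [mul_pow, hb, hd, one_mul],
        Or.inl (by
          rw [Units.val_mul, hx, hy, Matrix.mul_fin_two]
          exact mat2_ext (by ring) (by ring) (by ring) (by ring))⟩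
    · exact ⟨a*c, b*d, by rw [mul_pow, ha, hc, one_mul], by rw [mul_pow, hb, hd, one_mul],
        Or.inr (by
          rw [Units.val_mul, hx, hy, Matrix.mul_fin_two]
          exact mat2_ext (by ring) (by ring) (by ring) (by ring))⟩
    · exact ⟨a*d, b*c, by rw [mul_pow, ha, hd, one_mul], by rw [mul_pow, hb, hc, one_mul],
        Or.inr (by
          rw [Units.val_mul, hx, hy, Matrix.mul_fin_two]
          exact mat2_ext (by ring) (by ring) (by ring) (by ring))⟩
    · exact ⟨a*d, b*c, by rw [mul_pow, ha, hd, one_mul], by rw [mul_pow, hb, hc, one_mul],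
        Or.inl (by
          rw [Units.val_mul, hx, hy, Matrix.mul_fin_two]
          exact mat2_ext (by ring) (by ring) (by ring) (by ring))⟩
  inv_mem' := by
    rintro x ⟨a, b, ha, hb, hx | hx⟩
    · refine ⟨a^5, b^5, ?_, ?_, Or.inl ?_⟩
      · rw [← pow_mul]; rw [show 5*6 = 6*5 by ring, pow_mul, ha, one_pow]
      · rw [← pow_mul]; rw [show 5*6 = 6*5 by ring, pow_mul, hb, one_pow]
      · refine Units.inv_eq_of_mul_eq_one_right ?_
        rw [hx, Matrix.mul_fin_two, Matrix.one_fin_two]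
        exact mat2_ext (by linear_combination ha) (by ring) (by ring) (by linear_combination hb)
    · refine ⟨b^5, a^5, ?_, ?_, Or.inr ?_⟩
      · rw [← pow_mul]; rw [show 5*6 = 6*5 by ring, pow_mul, hb, one_pow]
      · rw [← pow_mul]; rw [show 5*6 = 6*5 by ring, pow_mul, ha, one_pow]
      · refine Units.inv_eq_of_mul_eq_one_right ?_
        rw [hx, Matrix.mul_fin_two, Matrix.one_fin_two]
        exact mat2_ext (by linear_combination ha) (by ring) (by ring) (by linear_combination hb)


lemma anti_ne_one {a b : ℂ} : !![0,a;b,0] ≠ 1 := fun h =>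
  zero_ne_one (mat2_entries (h.trans Matrix.one_fin_two)).1

lemma anti_sq_one {a b : ℂ} (hab : a * b = 1) : !![0,a;b,0] * !![0,a;b,0] = 1 := by
  rw [Matrix.mul_fin_two, Matrix.one_fin_two]
  exact mat2_ext (by linear_combination hab) (by ring) (by ring) (by linear_combination hab)

theorem stmt12
    (u s t : Matrix (Fin 2) (Fin 2) ℂ)
    (hu : u = !![0, 1; 1, 0])
    (hs : s = !![0, zeta; zeta⁻¹, 0])
    (ht : t = !![zeta, 0; 0, 1])
    (G₁ G₄ : Subgroup (GL (Fin 2) ℂ))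
    (hG₁ : G₁ = Subgroup.closure
      {x : GL (Fin 2) ℂ | (x : Matrix (Fin 2) (Fin 2) ℂ) = !![0, 1; 1, 0] ∨
        (x : Matrix (Fin 2) (Fin 2) ℂ) = !![0, -1; -1, 0] ∨
        (x : Matrix (Fin 2) (Fin 2) ℂ) = !![-1, 0; 0, 1]})
    (hG₄ : G₄ = Subgroup.closure
      {x : GL (Fin 2) ℂ | (x : Matrix (Fin 2) (Fin 2) ℂ) = u ∨
        (x : Matrix (Fin 2) (Fin 2) ℂ) = s ∨ (x : Matrix (Fin 2) (Fin 2) ℂ) = t}) :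
    G₁ ≤ G₄ ∧
    u * s * u = !![0, zeta⁻¹; zeta, 0] ∧
    s * u * s = !![0, zeta ^ 2; zeta ^ (-2 : ℤ), 0] ∧
    u * s * u * s * u = !![0, zeta ^ (-2 : ℤ); zeta ^ 2, 0] ∧
    (∀ M : GL (Fin 2) ℂ,
      (M ∈ G₄ ∧ (M : Matrix (Fin 2) (Fin 2) ℂ) * (M : Matrix (Fin 2) (Fin 2) ℂ) = 1 ∧
        (M : Matrix (Fin 2) (Fin 2) ℂ) ≠ 1)
      ↔ ((M ∈ G₁ ∧ (M : Matrix (Fin 2) (Fin 2) ℂ) * (M : Matrix (Fin 2) (Fin 2) ℂ) = 1 ∧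
          (M : Matrix (Fin 2) (Fin 2) ℂ) ≠ 1) ∨
        (M : Matrix (Fin 2) (Fin 2) ℂ) = s ∨
        (M : Matrix (Fin 2) (Fin 2) ℂ) = u * s * u ∨
        (M : Matrix (Fin 2) (Fin 2) ℂ) = s * u * s ∨
        (M : Matrix (Fin 2) (Fin 2) ℂ) = u * s * u * s * u)) := by
  subst hG₁ hG₄
  -- basic zeta facts
  have hz5 : zeta⁻¹ = zeta ^ 5 := zeta_inv
  have hzm2 : zeta ^ (-2:ℤ) = zeta ^ 4 := zeta_zpow_neg_two
  have hs' : s = !![0, zeta; zeta ^ 5, 0] := by rw [hs, hz5]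
  -- matrix computations
  have hu2 : u * u = 1 := by
    rw [hu, Matrix.mul_fin_two, Matrix.one_fin_two]; norm_num
  have hs2 : s * s = 1 := by
    rw [hs']; exact anti_sq_one (by linear_combination zeta_pow_six)
  have htr : t * !![zeta^5,0;0,1] = 1 := by
    rw [ht, Matrix.mul_fin_two, Matrix.one_fin_two]
    exact mat2_ext (by linear_combination zeta_pow_six) (by ring) (by ring) (by ring)
  have htl : !![zeta^5,0;0,1] * t = 1 := by
    rw [ht, Matrix.mul_fin_two, Matrix.one_fin_two]
    exact mat2_ext (by linear_combination zeta_pow_six) (by ring) (by ring) (by ring)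
  have ht3 : t * t * t = !![-1, 0; 0, 1] := by
    rw [ht, Matrix.mul_fin_two, Matrix.mul_fin_two]
    exact mat2_ext (by linear_combination zeta_cube) (by ring) (by ring) (by ring)
  have hUSU : u * s * u = !![0, zeta ^ 5; zeta, 0] := by
    rw [hu, hs', Matrix.mul_fin_two, Matrix.mul_fin_two]
    exact mat2_ext (by ring) (by ring) (by ring) (by ring)
  have hSUS : s * u * s = !![0, zeta ^ 2; zeta ^ 4, 0] := by
    rw [hu, hs', Matrix.mul_fin_two, Matrix.mul_fin_two]
    exact mat2_ext (by ring) (by ring) (by linear_combination zeta^4 * zeta_pow_six) (by ring)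
  have hUSUSU : u * s * u * s * u = !![0, zeta ^ 4; zeta ^ 2, 0] := by
    rw [hu, hs', Matrix.mul_fin_two, Matrix.mul_fin_two, Matrix.mul_fin_two, Matrix.mul_fin_two]
    exact mat2_ext (by ring) (by linear_combination zeta^4 * zeta_pow_six) (by ring) (by ring)
  -- units
  have hw2 : !![(-1:ℂ),0;0,1] * !![(-1:ℂ),0;0,1] = 1 := by
    rw [Matrix.mul_fin_two, Matrix.one_fin_two]; norm_num
  let U : GL (Fin 2) ℂ := ⟨u, u, hu2, hu2⟩
  let S : GL (Fin 2) ℂ := ⟨s, s, hs2, hs2⟩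
  let T : GL (Fin 2) ℂ := ⟨t, !![zeta^5,0;0,1], htr, htl⟩
  let W : GL (Fin 2) ℂ := ⟨!![(-1:ℂ),0;0,1], !![(-1:ℂ),0;0,1], hw2, hw2⟩
  have memU : U ∈ Subgroup.closure
      {x : GL (Fin 2) ℂ | (x : Matrix (Fin 2) (Fin 2) ℂ) = u ∨
        (x : Matrix (Fin 2) (Fin 2) ℂ) = s ∨ (x : Matrix (Fin 2) (Fin 2) ℂ) = t} :=
    Subgroup.subset_closure (Or.inl rfl)
  have memS : S ∈ Subgroup.closure
      {x : GL (Fin 2) ℂ | (x : Matrix (Fin 2) (Fin 2) ℂ) = u ∨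
        (x : Matrix (Fin 2) (Fin 2) ℂ) = s ∨ (x : Matrix (Fin 2) (Fin 2) ℂ) = t} :=
    Subgroup.subset_closure (Or.inr (Or.inl rfl))
  have memT : T ∈ Subgroup.closure
      {x : GL (Fin 2) ℂ | (x : Matrix (Fin 2) (Fin 2) ℂ) = u ∨
        (x : Matrix (Fin 2) (Fin 2) ℂ) = s ∨ (x : Matrix (Fin 2) (Fin 2) ℂ) = t} :=
    Subgroup.subset_closure (Or.inr (Or.inr rfl))
  have memU1 : U ∈ Subgroup.closure
      {x : GL (Fin 2) ℂ | (x : Matrix (Fin 2) (Fin 2) ℂ) = !![0, 1; 1, 0] ∨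
        (x : Matrix (Fin 2) (Fin 2) ℂ) = !![0, -1; -1, 0] ∨
        (x : Matrix (Fin 2) (Fin 2) ℂ) = !![-1, 0; 0, 1]} :=
    Subgroup.subset_closure (Or.inl hu)
  have memW1 : W ∈ Subgroup.closure
      {x : GL (Fin 2) ℂ | (x : Matrix (Fin 2) (Fin 2) ℂ) = !![0, 1; 1, 0] ∨
        (x : Matrix (Fin 2) (Fin 2) ℂ) = !![0, -1; -1, 0] ∨
        (x : Matrix (Fin 2) (Fin 2) ℂ) = !![-1, 0; 0, 1]} :=
    Subgroup.subset_closure (Or.inr (Or.inr rfl))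
  -- part 1 : G₁ ≤ G₄
  have part1 : Subgroup.closure
      {x : GL (Fin 2) ℂ | (x : Matrix (Fin 2) (Fin 2) ℂ) = !![0, 1; 1, 0] ∨
        (x : Matrix (Fin 2) (Fin 2) ℂ) = !![0, -1; -1, 0] ∨
        (x : Matrix (Fin 2) (Fin 2) ℂ) = !![-1, 0; 0, 1]} ≤ Subgroup.closure
      {x : GL (Fin 2) ℂ | (x : Matrix (Fin 2) (Fin 2) ℂ) = u ∨
        (x : Matrix (Fin 2) (Fin 2) ℂ) = s ∨ (x : Matrix (Fin 2) (Fin 2) ℂ) = t} := by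
    rw [Subgroup.closure_le]
    rintro x (hx | hx | hx)
    · exact Subgroup.subset_closure (Or.inl (hx.trans hu.symm))
    · have hx2 : x = T * T * T * U * (T * T * T) := by
        refine Units.ext ?_
        show (x : Matrix (Fin 2) (Fin 2) ℂ) = t * t * t * u * (t * t * t)
        rw [hx, ht3, hu, Matrix.mul_fin_two, Matrix.mul_fin_two]
        norm_num
      rw [hx2]
      exact mul_mem (mul_mem (mul_mem (mul_mem memT memT) memT) memU)
        (mul_mem (mul_mem memT memT) memT)
    · have hx2 : x = T * T * T := by
        refine Units.ext ?_
        show (x : Matrix (Fin 2) (Fin 2) ℂ) = t * t * t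
        rw [hx, ht3]
      rw [hx2]
      exact mul_mem (mul_mem memT memT) memT
  -- G₄ is contained in the monomial group
  have hG4H : Subgroup.closure
      {x : GL (Fin 2) ℂ | (x : Matrix (Fin 2) (Fin 2) ℂ) = u ∨
        (x : Matrix (Fin 2) (Fin 2) ℂ) = s ∨ (x : Matrix (Fin 2) (Fin 2) ℂ) = t} ≤ Hgrp := by
    rw [Subgroup.closure_le]
    rintro x (hx | hx | hx)
    · exact ⟨1, 1, one_pow 6, one_pow 6, Or.inr (by rw [hx, hu])⟩
    · refine ⟨zeta, zeta^5, zeta_pow_six, ?_, Or.inr (by rw [hx, hs'])⟩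
      have h56 : (zeta^5)^6 = (zeta^6)^5 := by ring
      rw [h56, zeta_pow_six, one_pow]
    · exact ⟨zeta, 1, zeta_pow_six, one_pow 6, Or.inl (by rw [hx, ht])⟩
  refine ⟨part1, hUSU.trans (mat2_ext rfl hz5.symm rfl rfl),
    hSUS.trans (mat2_ext rfl rfl hzm2.symm rfl),
    hUSUSU.trans (mat2_ext rfl hzm2.symm rfl rfl), fun M => ⟨?_, ?_⟩⟩
  · rintro ⟨hM4, hsq, hne⟩
    obtain ⟨a, b, ha, hb, hform | hform⟩ := hG4H hM4
    · -- diagonal case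
      have hsq2 := hsq
      rw [hform, Matrix.mul_fin_two, Matrix.one_fin_two] at hsq2
      obtain ⟨e00, -, -, e11⟩ := mat2_entries hsq2
      have ha2 : a = 1 ∨ a = -1 := mul_self_eq_one_iff.mp (by linear_combination e00)
      have hb2 : b = 1 ∨ b = -1 := mul_self_eq_one_iff.mp (by linear_combination e11)
      left
      rcases ha2 with rfl | rfl <;> rcases hb2 with rfl | rfl
      · exact absurd (hform.trans Matrix.one_fin_two.symm) hne
      · -- diag(1,-1) = U * W * U
        have hM : M = U * W * U := by
          refine Units.ext ?_
          show (M : Matrix (Fin 2) (Fin 2) ℂ) = u * !![(-1:ℂ),0;0,1] * u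
          rw [hform, hu, Matrix.mul_fin_two, Matrix.mul_fin_two]
          norm_num
        exact ⟨hM ▸ mul_mem (mul_mem memU1 memW1) memU1, hsq, hne⟩
      · exact ⟨Subgroup.subset_closure (Or.inr (Or.inr hform)), hsq, hne⟩
      · -- diag(-1,-1) = W * U * W * U
        have hM : M = W * U * W * U := by
          refine Units.ext ?_
          show (M : Matrix (Fin 2) (Fin 2) ℂ) = !![(-1:ℂ),0;0,1] * u * !![(-1:ℂ),0;0,1] * u
          rw [hform, hu, Matrix.mul_fin_two, Matrix.mul_fin_two, Matrix.mul_fin_two]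
          norm_num
        exact ⟨hM ▸ mul_mem (mul_mem (mul_mem memW1 memU1) memW1) memU1, hsq, hne⟩
    · -- antidiagonal case
      have hsq2 := hsq
      rw [hform, Matrix.mul_fin_two, Matrix.one_fin_two] at hsq2
      obtain ⟨e00, -, -, -⟩ := mat2_entries hsq2
      have hab : a * b = 1 := by linear_combination e00
      rcases root6 ha with rfl | rfl | rfl | rfl | rfl | rfl
      · have hb1 : b = 1 := by linear_combination hab
        subst hb1
        exact Or.inl ⟨Subgroup.subset_closure (Or.inl hform), hsq, hne⟩
      · have hb1 : b = -1 := by linear_combination -hab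
        subst hb1
        exact Or.inl ⟨Subgroup.subset_closure (Or.inr (Or.inl hform)), hsq, hne⟩
      · have hb1 : b = zeta ^ 5 := mul_left_cancel₀ zeta_ne_zero
          (by rw [hab]; linear_combination -zeta_pow_six)
        subst hb1
        exact Or.inr (Or.inl (hform.trans hs'.symm))
      · have hb1 : b = zeta ^ 4 := mul_left_cancel₀ (pow_ne_zero 2 zeta_ne_zero)
          (by rw [hab]; linear_combination -zeta_pow_six)
        subst hb1
        exact Or.inr (Or.inr (Or.inr (Or.inl (hform.trans hSUS.symm))))
      · have hb1 : b = zeta ^ 2 := mul_left_cancel₀ (pow_ne_zero 4 zeta_ne_zero)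
          (by rw [hab]; linear_combination -zeta_pow_six)
        subst hb1
        exact Or.inr (Or.inr (Or.inr (Or.inr (hform.trans hUSUSU.symm))))
      · have hb1 : b = zeta := mul_left_cancel₀ (pow_ne_zero 5 zeta_ne_zero)
          (by rw [hab]; linear_combination -zeta_pow_six)
        subst hb1
        exact Or.inr (Or.inr (Or.inl (hform.trans hUSU.symm)))
  · rintro (⟨hM1, hsq, hne⟩ | hMs | hMs | hMs | hMs)
    · exact ⟨part1 hM1, hsq, hne⟩
    · refine ⟨Subgroup.subset_closure (Or.inr (Or.inl hMs)), ?_, ?_⟩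
      · rw [hMs, hs']; exact anti_sq_one (by linear_combination zeta_pow_six)
      · rw [hMs, hs']; exact anti_ne_one
    · have hM : M = U * S * U := Units.ext hMs
      refine ⟨hM ▸ mul_mem (mul_mem memU memS) memU, ?_, ?_⟩
      · rw [hMs, hUSU]; exact anti_sq_one (by linear_combination zeta_pow_six)
      · rw [hMs, hUSU]; exact anti_ne_one
    · have hM : M = S * U * S := Units.ext hMs
      refine ⟨hM ▸ mul_mem (mul_mem memS memU) memS, ?_, ?_⟩
      · rw [hMs, hSUS]; exact anti_sq_one (by linear_combination zeta_pow_six)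
      · rw [hMs, hSUS]; exact anti_ne_one
    · have hM : M = U * S * U * S * U := Units.ext hMs
      refine ⟨hM ▸ mul_mem (mul_mem (mul_mem (mul_mem memU memS) memU) memS) memU, ?_, ?_⟩
      · rw [hMs, hUSUSU]; exact anti_sq_one (by linear_combination zeta_pow_six)
      · rw [hMs, hUSUSU]; exact anti_ne_one
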